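/- Let C be a k-dimensional linear code in F_q^n whose dual code C^⊥ has minimum Hamming distance exactly 3. If the number of codewords of C^⊥ of Hamming weight exactly 3 is strictly less than (q-1)·n/3, then C does not have locality 2. -/

import Mathlib

open scoped Classical

/-- The Hamming weight of a vector: the number of nonzero coordinates. -/
noncomputable def hamWt {F : Type} [Field F] {n : ℕ} (c : Fin n → F) : ℕ :=
  (Finset.univ.filter fun i => c i ≠ 0).card

/-- `C` is a linear `[n,k,d]` code over `F`: a `k`-dimensional subspace of `F^n`
in which every nonzero codeword has Hamming weight at least `d`. -/
def IsCode {F : Type} [Field F] {n : ℕ} (k d : ℕ) (C : Submodule F (Fin n → F)) : Prop :=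
  Module.finrank F ↥C = k ∧ ∀ c ∈ C, c ≠ 0 → d ≤ hamWt c

/-- `C ⊆ F^n` has locality `r`: every coordinate `i` has a recovery set `S` of at most `r`
other coordinates such that any two codewords agreeing on `S` agree at `i`. -/
def HasLocality {F : Type} [Field F] {n : ℕ} (C : Submodule F (Fin n → F)) (r : ℕ) : Prop :=
  ∀ i : Fin n, ∃ S : Finset (Fin n), i ∉ S ∧ S.card ≤ r ∧
    ∀ c ∈ C, ∀ c' ∈ C, (∀ j ∈ S, c j = c' j) → c i = c' i

/-- There exists a linear `[n,k,d]_q` code (over some field with `q` elements). -/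
def CodeExists (q n k d : ℕ) : Prop :=
  ∃ (F : Type) (_ : Field F), Nat.card F = q ∧
    ∃ C : Submodule F (Fin n → F), IsCode k d C

/-- There exists a linear `[n,k,d]_q` code with locality `r`. -/
def LRCExists (q n k d r : ℕ) : Prop :=
  ∃ (F : Type) (_ : Field F), Nat.card F = q ∧
    ∃ C : Submodule F (Fin n → F), IsCode k d C ∧ HasLocality C r

/-- `n_q(k,d)`: the smallest length of a linear `[n,k,d]_q` code. -/
noncomputable def nCode (q k d : ℕ) : ℕ := sInf {n | CodeExists q n k d}

/-- `n_q(k,d,r)`: the smallest length of a linear `[n,k,d]_q` code with locality `r`. -/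
noncomputable def nLRC (q k d r : ℕ) : ℕ := sInf {n | LRCExists q n k d r}

/-- There exists an `[n,k]_q` code with locality `r` (no condition on minimum distance). -/
def LRCExistsNoDist (q n k r : ℕ) : Prop :=
  ∃ (F : Type) (_ : Field F), Nat.card F = q ∧
    ∃ C : Submodule F (Fin n → F), Module.finrank F ↥C = k ∧ HasLocality C r

/-- `n'_q(k,r)`: the smallest length of an `[n,k]_q` code with locality `r`. -/
noncomputable def nLRCNoDist (q k r : ℕ) : ℕ := sInf {n | LRCExistsNoDist q n k r}

/-- The dual code of `C`. -/
def dualCode {F : Type} [Field F] {n : ℕ} (C : Submodule F (Fin n → F)) : Set (Fin n → F) :=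
  {x | ∀ c ∈ C, ∑ j, x j * c j = 0}

/-- `C` is projective: non-degenerate and no two coordinates are proportional. -/
def IsProjective {F : Type} [Field F] {n : ℕ} (C : Submodule F (Fin n → F)) : Prop :=
  (∀ i : Fin n, ∃ c ∈ C, c i ≠ 0) ∧
    (∀ i j : Fin n, i ≠ j → ∀ lam : F, lam ≠ 0 → ∃ c ∈ C, c i ≠ lam * c j)

/-- The Griesmer bound `g_q(k,d) = ∑_{i=0}^{k-1} ⌈d/q^i⌉`. -/
noncomputable def griesmer (q k d : ℕ) : ℕ :=
  ∑ i ∈ Finset.range k, ⌈(d : ℚ) / (q : ℚ) ^ i⌉₊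

/-- From a local recovery set for coordinate `i`, produce a dual codeword supported in
`{i} ∪ S` which is nonzero at `i`. -/
lemma exists_dual_word_of_recovery {F : Type} [Field F] {n : ℕ}
    (C : Submodule F (Fin n → F)) (i : Fin n) (S : Finset (Fin n)) (hi : i ∉ S)
    (hS : ∀ c ∈ C, ∀ c' ∈ C, (∀ j ∈ S, c j = c' j) → c i = c' i) :
    ∃ x : Fin n → F, x ∈ dualCode C ∧ x i ≠ 0 ∧ ∀ j, x j ≠ 0 → j = i ∨ j ∈ S := by
  classical
  let ev : Fin n → (↥C →ₗ[F] F) := fun j => (LinearMap.proj j).comp C.subtype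
  have hker : ⨅ j : S, LinearMap.ker (ev (j : Fin n)) ≤ LinearMap.ker (ev i) := by
    intro c hc
    simp only [Submodule.mem_iInf, LinearMap.mem_ker] at hc ⊢
    have h0 := hS (c : Fin n → F) c.2 0 C.zero_mem
      (fun j hj => by simpa [ev] using hc ⟨j, hj⟩)
    simpa [ev] using h0
  have hspan := mem_span_of_iInf_ker_le_ker (L := fun j : S => ev (j : Fin n))
    (K := ev i) hker
  obtain ⟨a, ha⟩ := (Submodule.mem_span_range_iff_exists_fun F).1 hspan
  refine ⟨fun j => if j = i then -1 else if h : j ∈ S then a ⟨j, h⟩ else 0, ?_, ?_, ?_⟩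
  · intro c hc
    have hsum : ∑ j : S, a j * c (j : Fin n) = c i := by
      have := congrArg (fun f => f ⟨c, hc⟩) ha
      simpa [ev] using this
    have hrest : ∑ j ∈ Finset.univ.erase i,
        (fun j => if j = i then (-1 : F) else if h : j ∈ S then a ⟨j, h⟩ else 0) j * c j
        = ∑ j : S, a j * c (j : Fin n) :=
      calc ∑ j ∈ Finset.univ.erase i,
            (fun j => if j = i then (-1 : F) else if h : j ∈ S then a ⟨j, h⟩ else 0) j * c j
          = ∑ j ∈ S,
            (fun j => if j = i then (-1 : F) else if h : j ∈ S then a ⟨j, h⟩ else 0) j * c j := by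
            refine (Finset.sum_subset ?_ ?_).symm
            · exact fun j hj => Finset.mem_erase.2 ⟨fun h => hi (h ▸ hj), Finset.mem_univ j⟩
            · intro j hje hj
              have hji : j ≠ i := (Finset.mem_erase.1 hje).1
              simp [hji, hj]
        _ = ∑ j : S,
            (fun j => if j = i then (-1 : F) else if h : j ∈ S then a ⟨j, h⟩ else 0)
              (j : Fin n) * c (j : Fin n) := (Finset.sum_coe_sort S _).symm
        _ = ∑ j : S, a j * c (j : Fin n) := Finset.sum_congr rfl (fun j _ => by
            have h1 : (j : Fin n) ≠ i := fun h => hi (h ▸ j.2)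
            simp [h1, j.2])
    calc ∑ j : Fin n,
          (fun j => if j = i then (-1 : F) else if h : j ∈ S then a ⟨j, h⟩ else 0) j * c j
        = (if i = i then (-1 : F) else if h : i ∈ S then a ⟨i, h⟩ else 0) * c i
            + ∑ j ∈ Finset.univ.erase i,
          (fun j => if j = i then (-1 : F) else if h : j ∈ S then a ⟨j, h⟩ else 0) j * c j :=
          (Finset.add_sum_erase _ _ (Finset.mem_univ i)).symm
      _ = -c i + ∑ j : S, a j * c (j : Fin n) := by rw [hrest]; simp
      _ = 0 := by rw [hsum]; ring
  · simp
  · intro j hj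
    by_cases hji : j = i
    · exact Or.inl hji
    · right
      by_contra hjS
      simp [hji, hjS] at hj

theorem few_weight3_dual_words_no_locality_2 (q n k : ℕ) (hq : IsPrimePow q)
    (F : Type) [Field F] [Fintype F] (hF : Fintype.card F = q)
    (C : Submodule F (Fin n → F)) (hk : Module.finrank F ↥C = k)
    (hmin3 : ∀ x ∈ dualCode C, x ≠ 0 → 3 ≤ hamWt x)
    (hex3 : ∃ x ∈ dualCode C, hamWt x = 3)
    (hcount : (Nat.card {x : Fin n → F // x ∈ dualCode C ∧ hamWt x = 3} : ℚ) <
      ((q : ℚ) - 1) * (n : ℚ) / 3) :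
    ¬ HasLocality C 2 := by
  intro hloc
  classical
  set T : Finset (Fin n → F) :=
    Finset.univ.filter (fun x => x ∈ dualCode C ∧ hamWt x = 3) with hT
  have hcard : (Nat.card {x : Fin n → F // x ∈ dualCode C ∧ hamWt x = 3}) = T.card := by
    rw [Nat.card_eq_fintype_card, Fintype.card_subtype]
  -- for each coordinate, a weight-3 dual word nonzero there
  have hxi : ∀ i : Fin n, ∃ x, x ∈ T ∧ x i ≠ 0 := by
    intro i
    obtain ⟨S, hiS, hScard, hSrec⟩ := hloc i
    obtain ⟨x, hxd, hxine, hsupp⟩ := exists_dual_word_of_recovery C i S hiS hSrec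
    have hle : hamWt x ≤ 3 := by
      have hsub : (Finset.univ.filter fun j => x j ≠ 0) ⊆ insert i S := by
        intro j hj
        rcases hsupp j (Finset.mem_filter.1 hj).2 with h | h
        · simp [h]
        · exact Finset.mem_insert_of_mem h
      calc hamWt x ≤ (insert i S).card := Finset.card_le_card hsub
        _ ≤ S.card + 1 := Finset.card_insert_le _ _
        _ ≤ 3 := by omega
    have hne : x ≠ 0 := fun h => hxine (by simp [h])
    have h3 : hamWt x = 3 := le_antisymm hle (hmin3 x hxd hne)
    exact ⟨x, Finset.mem_filter.2 ⟨Finset.mem_univ _, hxd, h3⟩, hxine⟩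
  have hq2 : 2 ≤ q := hq.two_le
  -- each column supports at least q-1 weight-3 dual words
  have hcol : ∀ i : Fin n, q - 1 ≤ (T.filter fun x => x i ≠ 0).card := by
    intro i
    obtain ⟨x, hxT, hxine⟩ := hxi i
    obtain ⟨-, hxd, hx3⟩ := Finset.mem_filter.1 hxT
    have hmap : ∀ lam ∈ (Finset.univ.filter fun lam : F => lam ≠ 0),
        lam • x ∈ T.filter fun y => y i ≠ 0 := by
      intro lam hlam
      have hlam0 : lam ≠ 0 := (Finset.mem_filter.1 hlam).2
      have hdual : lam • x ∈ dualCode C := by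
        intro c hc
        have h0 := hxd c hc
        calc ∑ j, (lam • x) j * c j = lam * ∑ j, x j * c j := by
              rw [Finset.mul_sum]; exact Finset.sum_congr rfl fun j _ => by
                simp [mul_assoc]
          _ = 0 := by rw [h0, mul_zero]
      have hwt : hamWt (lam • x) = hamWt x := by
        unfold hamWt
        congr 1
        apply Finset.filter_congr
        intro j _
        simp [hlam0]
      refine Finset.mem_filter.2 ⟨Finset.mem_filter.2 ⟨Finset.mem_univ _, hdual, by
        rw [hwt, hx3]⟩, ?_⟩
      simp [hlam0, hxine]
    have hinj : Set.InjOn (fun lam : F => lam • x)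
        ↑(Finset.univ.filter fun lam : F => lam ≠ 0) := by
      intro l1 _ l2 _ heq
      have := congrFun heq i
      simp only [Pi.smul_apply, smul_eq_mul] at this
      exact mul_right_cancel₀ hxine this
    have hle := Finset.card_le_card_of_injOn _ hmap hinj
    have hcardF : (Finset.univ.filter fun lam : F => lam ≠ 0).card = q - 1 := by
      rw [Finset.filter_ne' Finset.univ (0 : F), Finset.card_erase_of_mem (Finset.mem_univ _),
        Finset.card_univ, hF]
    rw [← hcardF]; exact hle
  -- double counting
  have hsum : ∑ x ∈ T, hamWt x = ∑ i : Fin n, (T.filter fun x => x i ≠ 0).card := by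
    unfold hamWt
    simp_rw [Finset.card_filter]
    rw [Finset.sum_comm]
  have hsum3 : ∑ x ∈ T, hamWt x = T.card * 3 := by
    rw [Finset.sum_congr rfl (fun x hx => (Finset.mem_filter.1 hx).2.2), Finset.sum_const,
      smul_eq_mul]
  have hnat : n * (q - 1) ≤ T.card * 3 := by
    calc n * (q - 1) = ∑ _i : Fin n, (q - 1) := by
          rw [Finset.sum_const, Finset.card_univ, Fintype.card_fin, smul_eq_mul]
      _ ≤ ∑ i : Fin n, (T.filter fun x => x i ≠ 0).card := Finset.sum_le_sum fun i _ => hcol i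
      _ = T.card * 3 := by rw [← hsum, hsum3]
  rw [hcard, lt_div_iff₀ (by norm_num : (0:ℚ) < 3)] at hcount
  have hq1 : 1 ≤ q := le_trans (by norm_num) hq2
  have hcast : (n : ℚ) * ((q : ℚ) - 1) ≤ (T.card : ℚ) * 3 := by
    have := (Nat.cast_le (α := ℚ)).2 hnat
    push_cast [Nat.cast_sub hq1] at this
    linarith
  linarith
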